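/- There do not exist points ξ¹,…,ξ⁸ ∈ [-1,1] and nonzero real weights λ₁,…,λ₈ such that ∫ f² dμ = Σⱼ₌₁⁸ λⱼ f(ξʲ)² for every f in span{h₀, h₁, …, h₇}; that is, m(X₈, w) ≥ 9. -/

import Mathlib

open MeasureTheory Set intervalIntegral

lemma int_poly (A B C a b : ℝ) :
    ∫ x in a..b, (A*x^2 + B*x + C) = A*(b^3-a^3)/3 + B*(b^2-a^2)/2 + C*(b-a) := by
  have h1 : IntervalIntegrable (fun x : ℝ => A*x^2) volume a b :=
    (by continuity : Continuous fun x : ℝ => A*x^2).intervalIntegrable a b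
  have h2 : IntervalIntegrable (fun x : ℝ => B*x) volume a b :=
    (by continuity : Continuous fun x : ℝ => B*x).intervalIntegrable a b
  have h3 : IntervalIntegrable (fun x : ℝ => (C:ℝ)) volume a b := intervalIntegrable_const
  rw [show (fun x : ℝ => A*x^2 + B*x + C) = (fun x : ℝ => (A*x^2 + B*x) + C) from rfl]
  rw [integral_add (h1.add h2) h3, integral_add h1 h2, intervalIntegral.integral_const_mul, intervalIntegral.integral_const_mul,
    integral_pow, integral_id, intervalIntegral.integral_const]
  simp only [smul_eq_mul]
  push_cast
  ring

lemma piece {f : ℝ → ℝ} {A B C a b : ℝ} (hab : a ≤ b)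
    (he : ∀ x ∈ Icc a b, f x = A*x^2 + B*x + C) :
    IntervalIntegrable f volume a b ∧
      ∫ x in a..b, f x = A*(b^3-a^3)/3 + B*(b^2-a^2)/2 + C*(b-a) := by
  have heq : EqOn f (fun x => A*x^2+B*x+C) (Set.uIcc a b) := by
    rw [uIcc_of_le hab]; exact he
  have hae : (fun x : ℝ => A*x^2+B*x+C) =ᵐ[volume.restrict (Set.uIoc a b)] f := by
    filter_upwards [ae_restrict_mem measurableSet_uIoc] with x hx
    exact (heq (uIoc_subset_uIcc hx)).symm
  refine ⟨((by continuity : Continuous fun x : ℝ => A*x^2+B*x+C).intervalIntegrable a b).congr_ae hae, ?_⟩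
  rw [integral_congr heq, int_poly]

lemma glue {f : ℝ → ℝ} {a b c v1 v2 : ℝ}
    (h1 : IntervalIntegrable f volume a b ∧ ∫ x in a..b, f x = v1)
    (h2 : IntervalIntegrable f volume b c ∧ ∫ x in b..c, f x = v2) :
    IntervalIntegrable f volume a c ∧ ∫ x in a..c, f x = v1 + v2 := by
  refine ⟨h1.1.trans h2.1, ?_⟩
  rw [← integral_add_adjacent_intervals h1.1 h2.1, h1.2, h2.2]

noncomputable def g (a b : ℝ) : ℝ → ℝ := fun x =>
  let l := (b - a) / 8
  if a ≤ x ∧ x < a + l then (x - a) / l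
  else if a + l ≤ x ∧ x < a + 3 * l then 1
  else if a + 3 * l ≤ x ∧ x < a + 5 * l then (-x + a + 4 * l) / l
  else if a + 5 * l ≤ x ∧ x < a + 7 * l then -1
  else if a + 7 * l ≤ x ∧ x ≤ b then (x - b) / l
  else 0

section geval
variable {a b x : ℝ}

lemma g_eval1 (hab : a < b) (h1 : a ≤ x) (h2 : x ≤ a + (b-a)/8) :
    g a b x = (x - a) / ((b-a)/8) := by
  have hl : 0 < (b-a)/8 := by linarith
  have hne : (b-a)/8 ≠ 0 := ne_of_gt hl
  have hba : b - a ≠ 0 := by linarith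
  rcases lt_or_eq_of_le h2 with hx | hx
  · simp only [g]; rw [if_pos ⟨h1, hx⟩]
  · simp only [g]
    rw [if_neg (by rintro ⟨_, c⟩; exact absurd hx (ne_of_gt (by linarith))),
        if_pos ⟨le_of_eq hx.symm, by linarith⟩]
    rw [hx]; field_simp; try ring_nf; try field_simp; try ring

lemma g_eval2 (hab : a < b) (h1 : a + (b-a)/8 ≤ x) (h2 : x ≤ a + 3*((b-a)/8)) :
    g a b x = 1 := by
  have hl : 0 < (b-a)/8 := by linarith
  have hne : (b-a)/8 ≠ 0 := ne_of_gt hl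
  have hba : b - a ≠ 0 := by linarith
  rcases lt_or_eq_of_le h2 with hx | hx
  · simp only [g]
    rw [if_neg (by rintro ⟨_, c⟩; linarith), if_pos ⟨h1, hx⟩]
  · simp only [g]
    rw [if_neg (by rintro ⟨_, c⟩; linarith),
        if_neg (by rintro ⟨_, c⟩; rw [hx] at c; linarith),
        if_pos ⟨le_of_eq hx.symm, by linarith⟩]
    rw [hx]; field_simp; try ring_nf; try field_simp; try ring

lemma g_eval3 (hab : a < b) (h1 : a + 3*((b-a)/8) ≤ x) (h2 : x ≤ a + 5*((b-a)/8)) :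
    g a b x = (-x + a + 4*((b-a)/8)) / ((b-a)/8) := by
  have hl : 0 < (b-a)/8 := by linarith
  have hne : (b-a)/8 ≠ 0 := ne_of_gt hl
  have hba : b - a ≠ 0 := by linarith
  rcases lt_or_eq_of_le h2 with hx | hx
  · simp only [g]
    rw [if_neg (by rintro ⟨_, c⟩; linarith), if_neg (by rintro ⟨_, c⟩; linarith),
        if_pos ⟨h1, hx⟩]
  · simp only [g]
    rw [if_neg (by rintro ⟨_, c⟩; linarith), if_neg (by rintro ⟨_, c⟩; linarith),
        if_neg (by rintro ⟨_, c⟩; rw [hx] at c; linarith),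
        if_pos ⟨le_of_eq hx.symm, by linarith⟩]
    rw [hx]; field_simp; try ring_nf; try field_simp; try ring

lemma g_eval4 (hab : a < b) (h1 : a + 5*((b-a)/8) ≤ x) (h2 : x ≤ a + 7*((b-a)/8)) :
    g a b x = -1 := by
  have hl : 0 < (b-a)/8 := by linarith
  have hne : (b-a)/8 ≠ 0 := ne_of_gt hl
  have hba : b - a ≠ 0 := by linarith
  rcases lt_or_eq_of_le h2 with hx | hx
  · simp only [g]
    rw [if_neg (by rintro ⟨_, c⟩; linarith), if_neg (by rintro ⟨_, c⟩; linarith),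
        if_neg (by rintro ⟨_, c⟩; linarith), if_pos ⟨h1, hx⟩]
  · simp only [g]
    rw [if_neg (by rintro ⟨_, c⟩; linarith), if_neg (by rintro ⟨_, c⟩; linarith),
        if_neg (by rintro ⟨_, c⟩; linarith),
        if_neg (by rintro ⟨_, c⟩; rw [hx] at c; linarith),
        if_pos ⟨le_of_eq hx.symm, by rw [hx]; linarith⟩]
    rw [hx]; field_simp; try ring_nf; try field_simp; try ring

lemma g_eval5 (hab : a < b) (h1 : a + 7*((b-a)/8) ≤ x) (h2 : x ≤ b) :
    g a b x = (x - b) / ((b-a)/8) := by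
  have hl : 0 < (b-a)/8 := by linarith
  have hne : (b-a)/8 ≠ 0 := ne_of_gt hl
  have hba : b - a ≠ 0 := by linarith
  simp only [g]
  rw [if_neg (by rintro ⟨_, c⟩; linarith), if_neg (by rintro ⟨_, c⟩; linarith),
      if_neg (by rintro ⟨_, c⟩; linarith), if_neg (by rintro ⟨_, c⟩; linarith),
      if_pos ⟨h1, h2⟩]

lemma g_zero (hab : a < b) (hx : x < a ∨ b < x) : g a b x = 0 := by
  have hl : 0 < (b-a)/8 := by linarith
  simp only [g]
  rcases hx with hx | hx <;>
  · rw [if_neg (by rintro ⟨c, _⟩; linarith), if_neg (by rintro ⟨c, _⟩; linarith),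
        if_neg (by rintro ⟨c, _⟩; linarith), if_neg (by rintro ⟨c, _⟩; linarith),
        if_neg (by rintro ⟨c, c'⟩; linarith)]

lemma g_supp (hab : a < b) (hx : g a b x ≠ 0) : a ≤ x ∧ x ≤ b := by
  by_contra hc
  push_neg at hc
  rcases le_or_gt a x with h | h
  · exact hx (g_zero hab (Or.inr (hc h)))
  · exact hx (g_zero hab (Or.inl h))
end geval
section gint
variable {a b : ℝ}

lemma g_int (hab : a < b) :
    IntervalIntegrable (g a b) volume a b ∧ ∫ x in a..b, g a b x = 0 := by
  have hl : 0 < (b-a)/8 := by linarith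
  have hba : b - a ≠ 0 := by linarith
  have hne : (b-a)/8 ≠ 0 := ne_of_gt hl
  have p1 := piece (f := g a b) (A := 0) (B := 1/((b-a)/8)) (C := -a/((b-a)/8))
      (a := a) (b := a + (b-a)/8) (by linarith)
      (fun x hx => by rw [g_eval1 hab hx.1 hx.2]; field_simp; ring)
  have p2 := piece (f := g a b) (A := 0) (B := 0) (C := 1)
      (a := a + (b-a)/8) (b := a + 3*((b-a)/8)) (by linarith)
      (fun x hx => by rw [g_eval2 hab hx.1 hx.2]; ring)
  have p3 := piece (f := g a b) (A := 0) (B := -(1/((b-a)/8))) (C := (a + 4*((b-a)/8))/((b-a)/8))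
      (a := a + 3*((b-a)/8)) (b := a + 5*((b-a)/8)) (by linarith)
      (fun x hx => by rw [g_eval3 hab hx.1 hx.2]; field_simp; ring)
  have p4 := piece (f := g a b) (A := 0) (B := 0) (C := -1)
      (a := a + 5*((b-a)/8)) (b := a + 7*((b-a)/8)) (by linarith)
      (fun x hx => by rw [g_eval4 hab hx.1 hx.2]; ring)
  have p5 := piece (f := g a b) (A := 0) (B := 1/((b-a)/8)) (C := -b/((b-a)/8))
      (a := a + 7*((b-a)/8)) (b := b) (by linarith)
      (fun x hx => by rw [g_eval5 hab hx.1 hx.2]; field_simp; ring)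
  obtain ⟨ii, iv⟩ := glue (glue (glue (glue p1 p2) p3) p4) p5
  refine ⟨ii, ?_⟩
  rw [iv]; field_simp; ring

lemma g_sq_int (hab : a < b) :
    IntervalIntegrable (fun x => (g a b x)^2) volume a b ∧
      ∫ x in a..b, (g a b x)^2 = 2*(b-a)/3 := by
  have hl : 0 < (b-a)/8 := by linarith
  have hba : b - a ≠ 0 := by linarith
  have hne : (b-a)/8 ≠ 0 := ne_of_gt hl
  have p1 := piece (f := fun x => (g a b x)^2) (A := 1/((b-a)/8)^2) (B := -2*a/((b-a)/8)^2)
      (C := a^2/((b-a)/8)^2)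
      (a := a) (b := a + (b-a)/8) (by linarith)
      (fun x hx => by show g a b x ^ 2 = _; rw [g_eval1 hab hx.1 hx.2]; field_simp; ring)
  have p2 := piece (f := fun x => (g a b x)^2) (A := 0) (B := 0) (C := 1)
      (a := a + (b-a)/8) (b := a + 3*((b-a)/8)) (by linarith)
      (fun x hx => by show g a b x ^ 2 = _; rw [g_eval2 hab hx.1 hx.2]; ring)
  have p3 := piece (f := fun x => (g a b x)^2) (A := 1/((b-a)/8)^2)
      (B := -2*(a + 4*((b-a)/8))/((b-a)/8)^2) (C := (a + 4*((b-a)/8))^2/((b-a)/8)^2)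
      (a := a + 3*((b-a)/8)) (b := a + 5*((b-a)/8)) (by linarith)
      (fun x hx => by show g a b x ^ 2 = _; rw [g_eval3 hab hx.1 hx.2]; field_simp; ring)
  have p4 := piece (f := fun x => (g a b x)^2) (A := 0) (B := 0) (C := 1)
      (a := a + 5*((b-a)/8)) (b := a + 7*((b-a)/8)) (by linarith)
      (fun x hx => by show g a b x ^ 2 = _; rw [g_eval4 hab hx.1 hx.2]; ring)
  have p5 := piece (f := fun x => (g a b x)^2) (A := 1/((b-a)/8)^2) (B := -2*b/((b-a)/8)^2)
      (C := b^2/((b-a)/8)^2)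
      (a := a + 7*((b-a)/8)) (b := b) (by linarith)
      (fun x hx => by show g a b x ^ 2 = _; rw [g_eval5 hab hx.1 hx.2]; field_simp; ring)
  obtain ⟨ii, iv⟩ := glue (glue (glue (glue p1 p2) p3) p4) p5
  refine ⟨ii, ?_⟩
  rw [iv]; field_simp; ring
end gint
lemma congr_piece {f f' : ℝ → ℝ} {p q v : ℝ} (hpq : p ≤ q)
    (he : ∀ x ∈ Icc p q, f x = f' x)
    (hf' : IntervalIntegrable f' volume p q ∧ ∫ x in p..q, f' x = v) :
    IntervalIntegrable f volume p q ∧ ∫ x in p..q, f x = v := by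
  have heq : EqOn f f' (Set.uIcc p q) := by rw [uIcc_of_le hpq]; exact he
  have hae : f' =ᵐ[volume.restrict (Set.uIoc p q)] f := by
    filter_upwards [ae_restrict_mem measurableSet_uIoc] with x hx
    exact (heq (uIoc_subset_uIcc hx)).symm
  exact ⟨hf'.1.congr_ae hae, by rw [integral_congr heq, hf'.2]⟩

lemma g_zero_le {a b x : ℝ} (hab : a < b) (hx : x ≤ a) : g a b x = 0 := by
  rcases lt_or_eq_of_le hx with hlt | heq
  · exact g_zero hab (Or.inl hlt)
  · rw [heq, g_eval1 hab le_rfl (by linarith)]; simp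

lemma g_zero_ge {a b x : ℝ} (hab : a < b) (hx : b ≤ x) : g a b x = 0 := by
  rcases lt_or_eq_of_le hx with hlt | heq
  · exact g_zero hab (Or.inr hlt)
  · rw [← heq, g_eval5 hab (by linarith) le_rfl]; simp

lemma h_supp {a m b c : ℝ} (ham : a < m) (hmb : m < b) {f : ℝ → ℝ}
    (hf : ∀ x, f x = g a m x + Real.sqrt c * g m b x) {x : ℝ} (hx : f x ≠ 0) :
    a ≤ x ∧ x ≤ b := by
  by_contra hcon
  push_neg at hcon
  rcases le_or_gt a x with hax | hax
  · have hbx : b < x := hcon hax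
    rw [hf x, g_zero_ge ham (by linarith), g_zero_ge hmb (by linarith)] at hx
    simp at hx
  · rw [hf x, g_zero_le ham (by linarith), g_zero_le hmb (by linarith)] at hx
    simp at hx

lemma hj_spec {a m b : ℝ} (ha : (-1:ℝ) < a) (ham : a < m) (hmb : m < b) (hb1 : b < 1)
    {c : ℝ} (hc : 0 ≤ c) {f : ℝ → ℝ} (hf : ∀ x, f x = g a m x + Real.sqrt c * g m b x) :
    (IntervalIntegrable f volume (-1) 1 ∧ ∫ x in (-1:ℝ)..1, f x = 0) ∧
    (IntervalIntegrable (fun x => f x ^ 2) volume (-1) 1 ∧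
      ∫ x in (-1:ℝ)..1, f x ^ 2 = 2*(m-a)/3 + c*(2*(b-m)/3)) := by
  constructor
  · have q1 := piece (f := f) (A := 0) (B := 0) (C := 0) (a := -1) (b := a) (by linarith)
      (fun x hx => by
        rw [hf x, g_zero_le ham hx.2, g_zero_le hmb (by linarith [hx.2])]; ring)
    have q2 := congr_piece (f := f) (f' := g a m) (le_of_lt ham)
      (fun x hx => by rw [hf x, g_zero_le hmb hx.2]; ring) (g_int ham)
    have q3 := congr_piece (f := f) (f' := fun x => Real.sqrt c * g m b x) (le_of_lt hmb)
      (fun x hx => by rw [hf x, g_zero_ge ham hx.1]; ring)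
      ⟨(g_int hmb).1.const_mul _, by rw [intervalIntegral.integral_const_mul, (g_int hmb).2, mul_zero]⟩
    have q4 := piece (f := f) (A := 0) (B := 0) (C := 0) (a := b) (b := 1) (by linarith)
      (fun x hx => by
        rw [hf x, g_zero_ge ham (by linarith [hx.1]), g_zero_ge hmb hx.1]; ring)
    obtain ⟨ii, iv⟩ := glue (glue (glue q1 q2) q3) q4
    exact ⟨ii, by rw [iv]; ring⟩
  · have hs : Real.sqrt c ^ 2 = c := Real.sq_sqrt hc
    have r1 := piece (f := fun x => f x ^ 2) (A := 0) (B := 0) (C := 0) (a := -1) (b := a)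
      (by linarith)
      (fun x hx => by
        show f x ^ 2 = _
        rw [hf x, g_zero_le ham hx.2, g_zero_le hmb (by linarith [hx.2])]; ring)
    have r2 := congr_piece (f := fun x => f x ^ 2) (f' := fun x => (g a m x)^2) (le_of_lt ham)
      (fun x hx => by show f x ^ 2 = _; rw [hf x, g_zero_le hmb hx.2]; ring) (g_sq_int ham)
    have r3 := congr_piece (f := fun x => f x ^ 2) (f' := fun x => c * (g m b x)^2) (le_of_lt hmb)
      (fun x hx => by
        show f x ^ 2 = _
        rw [hf x, g_zero_ge ham hx.1]
        linear_combination ((g m b x)^2) * hs)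
      ⟨((g_sq_int hmb).1.const_mul c), by rw [intervalIntegral.integral_const_mul, (g_sq_int hmb).2]⟩
    have r4 := piece (f := fun x => f x ^ 2) (A := 0) (B := 0) (C := 0) (a := b) (b := 1)
      (by linarith)
      (fun x hx => by
        show f x ^ 2 = _
        rw [hf x, g_zero_ge ham (by linarith [hx.1]), g_zero_ge hmb hx.1]; ring)
    obtain ⟨ii, iv⟩ := glue (glue (glue r1 r2) r3) r4
    exact ⟨ii, by rw [iv]; ring⟩
noncomputable def h0 : ℝ → ℝ := fun x =>
  if x < 0 then 0
  else if x < 1/16 then Real.sqrt (24 * x)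
  else if x < 1/8 then Real.sqrt (-8 * x + 2)
  else 1

noncomputable def h1 : ℝ → ℝ := fun x => if x < 0 then -x / 2 else g 0 1 x

lemma h0_eval_one {x : ℝ} (hx : 1/8 ≤ x) : h0 x = 1 := by
  simp only [h0]
  rw [if_neg (by push_neg; linarith), if_neg (by push_neg; linarith),
      if_neg (by push_neg; linarith)]

lemma h1_eval_one {x : ℝ} (h1x : 9/64 ≤ x) (h2x : x ≤ 15/64) : h1 x = 1 := by
  simp only [h1]
  rw [if_neg (by push_neg; linarith)]
  exact g_eval2 (by norm_num) (by linarith) (by linarith)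

lemma h1_eval_negone {x : ℝ} (h1x : 41/64 ≤ x) (h2x : x ≤ 47/64) : h1 x = -1 := by
  simp only [h1]
  rw [if_neg (by push_neg; linarith)]
  exact g_eval4 (by norm_num) (by linarith) (by linarith)

lemma h0_sq : IntervalIntegrable (fun x => h0 x ^ 2) volume (-1) 1 ∧
    ∫ x in (-1:ℝ)..1, h0 x ^ 2 = 1 := by
  have p1 := piece (f := fun x => h0 x ^ 2) (A := 0) (B := 0) (C := 0)
      (a := -1) (b := 0) (by norm_num)
      (fun x hx => by
        show h0 x ^ 2 = _
        simp only [h0]; split_ifs with H1 H2 H3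
        · ring
        · have hx0 : x = 0 := le_antisymm hx.2 (not_lt.1 H1)
          subst hx0; norm_num
        · exfalso; have hx0 : x = 0 := le_antisymm hx.2 (not_lt.1 H1)
          subst hx0; norm_num at H2
        · exfalso; have hx0 : x = 0 := le_antisymm hx.2 (not_lt.1 H1)
          subst hx0; norm_num at H3)
  have p2 := piece (f := fun x => h0 x ^ 2) (A := 0) (B := 24) (C := 0)
      (a := 0) (b := 1/16) (by norm_num)
      (fun x hx => by
        show h0 x ^ 2 = _
        simp only [h0]; split_ifs with H1 H2 H3
        · exfalso; exact absurd hx.1 (not_le.2 H1)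
        · rw [Real.sq_sqrt (by linarith [hx.1])]; ring
        · have hx0 : x = 1/16 := le_antisymm hx.2 (not_lt.1 H2)
          subst hx0; rw [Real.sq_sqrt (by norm_num)]; norm_num
        · exfalso; have := not_lt.1 H3; linarith [hx.2])
  have p3 := piece (f := fun x => h0 x ^ 2) (A := 0) (B := -8) (C := 2)
      (a := 1/16) (b := 1/8) (by norm_num)
      (fun x hx => by
        show h0 x ^ 2 = _
        simp only [h0]; split_ifs with H1 H2 H3
        · exfalso; linarith [hx.1]
        · exfalso; linarith [hx.1]
        · rw [Real.sq_sqrt (by linarith [hx.2])]; ring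
        · have hx0 : x = 1/8 := le_antisymm hx.2 (not_lt.1 H3)
          subst hx0; norm_num)
  have p4 := piece (f := fun x => h0 x ^ 2) (A := 0) (B := 0) (C := 1)
      (a := 1/8) (b := 1) (by norm_num)
      (fun x hx => by
        show h0 x ^ 2 = _
        rw [h0_eval_one hx.1]; ring)
  obtain ⟨ii, iv⟩ := glue (glue (glue p1 p2) p3) p4
  exact ⟨ii, by rw [iv]; norm_num⟩

lemma h1_sq : IntervalIntegrable (fun x => h1 x ^ 2) volume (-1) 1 ∧
    ∫ x in (-1:ℝ)..1, h1 x ^ 2 = 3/4 := by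
  have p1 := piece (f := fun x => h1 x ^ 2) (A := 1/4) (B := 0) (C := 0)
      (a := -1) (b := 0) (by norm_num)
      (fun x hx => by
        show h1 x ^ 2 = _
        simp only [h1]; split_ifs with H1
        · ring
        · have hx0 : x = 0 := le_antisymm hx.2 (not_lt.1 H1)
          subst hx0
          rw [g_eval1 (by norm_num) le_rfl (by norm_num)]; norm_num)
  have p2 := congr_piece (f := fun x => h1 x ^ 2) (f' := fun x => (g 0 1 x) ^ 2)
      (by norm_num)
      (fun x hx => by
        show h1 x ^ 2 = _
        simp only [h1]; rw [if_neg (not_lt.2 hx.1)]) (g_sq_int (by norm_num))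
  obtain ⟨ii, iv⟩ := glue p1 p2
  exact ⟨ii, by rw [iv]; norm_num⟩
noncomputable def h2 : ℝ → ℝ := fun x => g (1/8) (1/4) x + Real.sqrt 5 * g (1/4) (3/8) x
noncomputable def h3 : ℝ → ℝ := fun x => g (5/8) (3/4) x + Real.sqrt 5 * g (3/4) (7/8) x
noncomputable def h4 : ℝ → ℝ := fun x => g (9/64) (5/32) x + Real.sqrt 23 * g (5/32) (11/64) x
noncomputable def h5 : ℝ → ℝ := fun x => g (13/64) (7/32) x + Real.sqrt 23 * g (7/32) (15/64) x
noncomputable def h6 : ℝ → ℝ := fun x => g (41/64) (21/32) x + Real.sqrt 23 * g (21/32) (43/64) x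
noncomputable def h7 : ℝ → ℝ := fun x => g (45/64) (23/32) x + Real.sqrt 23 * g (23/32) (47/64) x

noncomputable def h : Fin 8 → ℝ → ℝ := ![h0, h1, h2, h3, h4, h5, h6, h7]

example : h 0 = h0 := rfl
example : h 4 = h4 := rfl
example : h 7 = h7 := rfl

lemma two_le_card {w v : Fin 8 → ℝ} {c : ℝ} (hc : c ≠ 0) (hw : ∀ i, w i ≠ 0)
    (hz : ∑ i, w i * v i = 0) (hs : ∑ i, w i * v i ^ 2 = c) :
    2 ≤ (Finset.univ.filter fun i => v i ≠ 0).card := by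
  set N := Finset.univ.filter fun i => v i ≠ 0 with hN
  have key : ∀ u : Fin 8 → ℝ, (∀ i, v i = 0 → u i = 0) → ∑ i ∈ N, u i = ∑ i, u i :=
    fun u hu => Finset.sum_subset (Finset.filter_subset _ _)
      (fun i _ hi => hu i (by simpa [hN] using hi))
  have kz : ∑ i ∈ N, w i * v i = 0 := by
    rw [key (fun i => w i * v i) (fun i hvi => by show w i * v i = 0; rw [hvi, mul_zero])]; exact hz
  have ks : ∑ i ∈ N, w i * v i ^ 2 = c := by
    rw [key (fun i => w i * v i ^ 2) (fun i hvi => by show w i * v i ^ 2 = 0; rw [hvi]; ring)]; exact hs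
  by_contra hcard
  push_neg at hcard
  have hle : N.card ≤ 1 := by omega
  rcases Nat.le_one_iff_eq_zero_or_eq_one.1 hle with hc0 | hc1
  · rw [Finset.card_eq_zero.1 hc0] at ks
    simp at ks; exact hc ks.symm
  · obtain ⟨i0, hi0⟩ := Finset.card_eq_one.1 hc1
    rw [hi0, Finset.sum_singleton] at kz ks
    have hv : v i0 ≠ 0 := by
      have : i0 ∈ N := hi0 ▸ Finset.mem_singleton_self i0
      simpa [hN] using this
    rcases mul_eq_zero.1 kz with hk | hk
    · exact hw i0 hk
    · exact hv hk

lemma node_facts (ξ lam : Fin 8 → ℝ) (hlam : ∀ j, lam j ≠ 0)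
    {fj : ℝ → ℝ} {ε cj : ℝ} (hε : ε = 1 ∨ ε = -1)
    (hmul : ∀ x, h1 x * fj x = ε * fj x)
    (I0 : IntervalIntegrable fj volume (-1) 1) (I0v : ∫ x in (-1:ℝ)..1, fj x = 0)
    (I2 : IntervalIntegrable (fun x => fj x ^ 2) volume (-1) 1)
    (I2v : ∫ x in (-1:ℝ)..1, fj x ^ 2 = cj) (hcj : cj ≠ 0)
    (E1 : (3:ℝ)/4 = ∑ j, lam j * h1 (ξ j) ^ 2)
    (Es : (∫ x in (-1:ℝ)..1, (h1 x + fj x) ^ 2) = ∑ j, lam j * (h1 (ξ j) + fj (ξ j)) ^ 2)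
    (Ej : cj = ∑ j, lam j * fj (ξ j) ^ 2) :
    2 ≤ (Finset.univ.filter fun i => fj (ξ i) ≠ 0).card := by
  have hIs : (∫ x in (-1:ℝ)..1, (h1 x + fj x) ^ 2) = 3/4 + 2*ε*0 + cj := by
    have hfe : (fun x => (h1 x + fj x) ^ 2)
        = fun x => h1 x ^ 2 + (2*ε) * fj x + fj x ^ 2 := by
      funext x; linear_combination 2 * hmul x
    rw [show (∫ x in (-1:ℝ)..1, (h1 x + fj x) ^ 2)
        = ∫ x in (-1:ℝ)..1, (h1 x ^ 2 + (2*ε) * fj x + fj x ^ 2) from by rw [hfe]]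
    rw [integral_add (h1_sq.1.add (I0.const_mul _)) I2,
        integral_add h1_sq.1 (I0.const_mul _), intervalIntegral.integral_const_mul, h1_sq.2, I0v, I2v]
    try ring
  have hSs : ∑ j, lam j * (h1 (ξ j) + fj (ξ j)) ^ 2
      = (∑ j, lam j * h1 (ξ j) ^ 2) + 2*ε*(∑ j, lam j * fj (ξ j))
        + ∑ j, lam j * fj (ξ j) ^ 2 := by
    rw [Finset.mul_sum, ← Finset.sum_add_distrib, ← Finset.sum_add_distrib]
    exact Finset.sum_congr rfl fun i _ => by linear_combination (2 * lam i) * hmul (ξ i)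
  have hz : ∑ j, lam j * fj (ξ j) = 0 := by
    have hh := Es
    rw [hIs, hSs, ← E1, ← Ej] at hh
    rcases hε with he | he <;> subst he <;> linarith
  exact two_le_card hcj hlam hz Ej.symm
set_option maxHeartbeats 2000000

theorem no_eight_point_discretization :
    ¬ ∃ (ξ : Fin 8 → ℝ) (l : Fin 8 → ℝ),
      (∀ j, ξ j ∈ Icc (-1:ℝ) 1) ∧ (∀ j, l j ≠ 0) ∧
      ∀ f ∈ Submodule.span ℝ (Set.range h),
        (∫ x in (-1:ℝ)..1, (f x) ^ 2) = ∑ j, l j * (f (ξ j)) ^ 2 := by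
  rintro ⟨ξ, lam, -, hlam, Q⟩
  have m0 : h0 ∈ Submodule.span ℝ (Set.range h) := Submodule.subset_span ⟨0, rfl⟩
  have m1 : h1 ∈ Submodule.span ℝ (Set.range h) := Submodule.subset_span ⟨1, rfl⟩
  have m4 : h4 ∈ Submodule.span ℝ (Set.range h) := Submodule.subset_span ⟨4, rfl⟩
  have m5 : h5 ∈ Submodule.span ℝ (Set.range h) := Submodule.subset_span ⟨5, rfl⟩
  have m6 : h6 ∈ Submodule.span ℝ (Set.range h) := Submodule.subset_span ⟨6, rfl⟩
  have m7 : h7 ∈ Submodule.span ℝ (Set.range h) := Submodule.subset_span ⟨7, rfl⟩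
  have E0 := Q h0 m0
  have E1 := Q h1 m1
  have E4 := Q h4 m4
  have E5 := Q h5 m5
  have E6 := Q h6 m6
  have E7 := Q h7 m7
  have Es4 := Q (h1 + h4) (Submodule.add_mem _ m1 m4)
  have Es5 := Q (h1 + h5) (Submodule.add_mem _ m1 m5)
  have Es6 := Q (h1 + h6) (Submodule.add_mem _ m1 m6)
  have Es7 := Q (h1 + h7) (Submodule.add_mem _ m1 m7)
  simp only [Pi.add_apply] at Es4 Es5 Es6 Es7
  rw [h0_sq.2] at E0
  rw [h1_sq.2] at E1
  have S4 := hj_spec (a := 9/64) (m := 5/32) (b := 11/64) (by norm_num) (by norm_num)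
      (by norm_num) (by norm_num) (c := 23) (by norm_num) (f := h4) (fun x => rfl)
  have S5 := hj_spec (a := 13/64) (m := 7/32) (b := 15/64) (by norm_num) (by norm_num)
      (by norm_num) (by norm_num) (c := 23) (by norm_num) (f := h5) (fun x => rfl)
  have S6 := hj_spec (a := 41/64) (m := 21/32) (b := 43/64) (by norm_num) (by norm_num)
      (by norm_num) (by norm_num) (c := 23) (by norm_num) (f := h6) (fun x => rfl)
  have S7 := hj_spec (a := 45/64) (m := 23/32) (b := 47/64) (by norm_num) (by norm_num)
      (by norm_num) (by norm_num) (c := 23) (by norm_num) (f := h7) (fun x => rfl)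
  rw [S4.2.2] at E4
  rw [S5.2.2] at E5
  rw [S6.2.2] at E6
  rw [S7.2.2] at E7
  have supp4 : ∀ i, h4 (ξ i) ≠ 0 → 9/64 ≤ ξ i ∧ ξ i ≤ 11/64 := fun i hi =>
    h_supp (by norm_num) (by norm_num) (f := h4) (fun x => rfl) hi
  have supp5 : ∀ i, h5 (ξ i) ≠ 0 → 13/64 ≤ ξ i ∧ ξ i ≤ 15/64 := fun i hi =>
    h_supp (by norm_num) (by norm_num) (f := h5) (fun x => rfl) hi
  have supp6 : ∀ i, h6 (ξ i) ≠ 0 → 41/64 ≤ ξ i ∧ ξ i ≤ 43/64 := fun i hi =>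
    h_supp (by norm_num) (by norm_num) (f := h6) (fun x => rfl) hi
  have supp7 : ∀ i, h7 (ξ i) ≠ 0 → 45/64 ≤ ξ i ∧ ξ i ≤ 47/64 := fun i hi =>
    h_supp (by norm_num) (by norm_num) (f := h7) (fun x => rfl) hi
  have hm4 : ∀ x, h1 x * h4 x = 1 * h4 x := fun x => by
    by_cases hx : h4 x = 0
    · rw [hx, mul_zero, mul_zero]
    · obtain ⟨lb, ub⟩ := h_supp (show (9:ℝ)/64 < 5/32 by norm_num) (by norm_num)
        (f := h4) (fun x => rfl) hx
      rw [h1_eval_one (by linarith) (by linarith)]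
  have hm5 : ∀ x, h1 x * h5 x = 1 * h5 x := fun x => by
    by_cases hx : h5 x = 0
    · rw [hx, mul_zero, mul_zero]
    · obtain ⟨lb, ub⟩ := h_supp (show (13:ℝ)/64 < 7/32 by norm_num) (by norm_num)
        (f := h5) (fun x => rfl) hx
      rw [h1_eval_one (by linarith) (by linarith)]
  have hm6 : ∀ x, h1 x * h6 x = (-1) * h6 x := fun x => by
    by_cases hx : h6 x = 0
    · rw [hx, mul_zero, mul_zero]
    · obtain ⟨lb, ub⟩ := h_supp (show (41:ℝ)/64 < 21/32 by norm_num) (by norm_num)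
        (f := h6) (fun x => rfl) hx
      rw [h1_eval_negone (by linarith) (by linarith)]
  have hm7 : ∀ x, h1 x * h7 x = (-1) * h7 x := fun x => by
    by_cases hx : h7 x = 0
    · rw [hx, mul_zero, mul_zero]
    · obtain ⟨lb, ub⟩ := h_supp (show (45:ℝ)/64 < 23/32 by norm_num) (by norm_num)
        (f := h7) (fun x => rfl) hx
      rw [h1_eval_negone (by linarith) (by linarith)]
  have c4 := node_facts ξ lam hlam (Or.inl rfl) hm4 S4.1.1 S4.1.2 S4.2.1 S4.2.2
      (by norm_num) E1 Es4 E4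
  have c5 := node_facts ξ lam hlam (Or.inl rfl) hm5 S5.1.1 S5.1.2 S5.2.1 S5.2.2
      (by norm_num) E1 Es5 E5
  have c6 := node_facts ξ lam hlam (Or.inr rfl) hm6 S6.1.1 S6.1.2 S6.2.1 S6.2.2
      (by norm_num) E1 Es6 E6
  have c7 := node_facts ξ lam hlam (Or.inr rfl) hm7 S7.1.1 S7.1.2 S7.2.1 S7.2.2
      (by norm_num) E1 Es7 E7
  set N4 := Finset.univ.filter (fun i => h4 (ξ i) ≠ 0) with hN4
  set N5 := Finset.univ.filter (fun i => h5 (ξ i) ≠ 0) with hN5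
  set N6 := Finset.univ.filter (fun i => h6 (ξ i) ≠ 0) with hN6
  set N7 := Finset.univ.filter (fun i => h7 (ξ i) ≠ 0) with hN7
  have d45 : Disjoint N4 N5 := Finset.disjoint_left.2 fun {i} hi4 hi5 => by
    have a4 := supp4 i (Finset.mem_filter.1 hi4).2
    have a5 := supp5 i (Finset.mem_filter.1 hi5).2
    linarith [a4.2, a5.1]
  have d46 : Disjoint N4 N6 := Finset.disjoint_left.2 fun {i} hi4 hi6 => by
    have a4 := supp4 i (Finset.mem_filter.1 hi4).2
    have a6 := supp6 i (Finset.mem_filter.1 hi6).2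
    linarith [a4.2, a6.1]
  have d47 : Disjoint N4 N7 := Finset.disjoint_left.2 fun {i} hi4 hi7 => by
    have a4 := supp4 i (Finset.mem_filter.1 hi4).2
    have a7 := supp7 i (Finset.mem_filter.1 hi7).2
    linarith [a4.2, a7.1]
  have d56 : Disjoint N5 N6 := Finset.disjoint_left.2 fun {i} hi5 hi6 => by
    have a5 := supp5 i (Finset.mem_filter.1 hi5).2
    have a6 := supp6 i (Finset.mem_filter.1 hi6).2
    linarith [a5.2, a6.1]
  have d57 : Disjoint N5 N7 := Finset.disjoint_left.2 fun {i} hi5 hi7 => by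
    have a5 := supp5 i (Finset.mem_filter.1 hi5).2
    have a7 := supp7 i (Finset.mem_filter.1 hi7).2
    linarith [a5.2, a7.1]
  have d67 : Disjoint N6 N7 := Finset.disjoint_left.2 fun {i} hi6 hi7 => by
    have a6 := supp6 i (Finset.mem_filter.1 hi6).2
    have a7 := supp7 i (Finset.mem_filter.1 hi7).2
    linarith [a6.2, a7.1]
  have cardU : (((N4 ∪ N5) ∪ N6) ∪ N7).card = N4.card + N5.card + N6.card + N7.card := by
    rw [Finset.card_union_of_disjoint
          (Finset.disjoint_union_left.2 ⟨Finset.disjoint_union_left.2 ⟨d47, d57⟩, d67⟩),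
        Finset.card_union_of_disjoint (Finset.disjoint_union_left.2 ⟨d46, d56⟩),
        Finset.card_union_of_disjoint d45]
  have hle : (((N4 ∪ N5) ∪ N6) ∪ N7).card ≤ 8 :=
    le_trans (Finset.card_le_univ _) (by simp)
  have hU : (((N4 ∪ N5) ∪ N6) ∪ N7) = Finset.univ :=
    Finset.eq_univ_of_card _ (by rw [Fintype.card_fin]; omega)
  have vals : ∀ i, h0 (ξ i) = 1 ∧ h1 (ξ i) ^ 2 = 1 := fun i => by
    have hi : i ∈ ((N4 ∪ N5) ∪ N6) ∪ N7 := hU.symm ▸ Finset.mem_univ i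
    rcases Finset.mem_union.1 hi with hi' | hi7
    · rcases Finset.mem_union.1 hi' with hi'' | hi6
      · rcases Finset.mem_union.1 hi'' with hi4 | hi5
        · obtain ⟨lb, ub⟩ := supp4 i (Finset.mem_filter.1 hi4).2
          exact ⟨h0_eval_one (by linarith),
            by rw [h1_eval_one (by linarith) (by linarith)]; norm_num⟩
        · obtain ⟨lb, ub⟩ := supp5 i (Finset.mem_filter.1 hi5).2
          exact ⟨h0_eval_one (by linarith),
            by rw [h1_eval_one (by linarith) (by linarith)]; norm_num⟩
      · obtain ⟨lb, ub⟩ := supp6 i (Finset.mem_filter.1 hi6).2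
        exact ⟨h0_eval_one (by linarith),
          by rw [h1_eval_negone (by linarith) (by linarith)]; norm_num⟩
    · obtain ⟨lb, ub⟩ := supp7 i (Finset.mem_filter.1 hi7).2
      exact ⟨h0_eval_one (by linarith),
        by rw [h1_eval_negone (by linarith) (by linarith)]; norm_num⟩
  have e0 : ∑ j, lam j * h0 (ξ j) ^ 2 = ∑ j, lam j :=
    Finset.sum_congr rfl fun i _ => by rw [(vals i).1]; ring
  have e1 : ∑ j, lam j * h1 (ξ j) ^ 2 = ∑ j, lam j :=
    Finset.sum_congr rfl fun i _ => by rw [(vals i).2, mul_one]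
  rw [e0] at E0
  rw [e1] at E1
  linarith
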